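/- A convex compact set Ω in a finite-dimensional real vector space is a simplex if and only if every point of Ω has a unique representation as a convex combination of extreme points of Ω (with distinct extreme points and strictly positive coefficients). -/

import Mathlib

/-- Ω is a simplex: the convex hull of an affinely independent finite set of points. -/
def IsSimplex {n : ℕ} (Ω : Set (EuclideanSpace ℝ (Fin n))) : Prop :=
  ∃ s : Finset (EuclideanSpace ℝ (Fin n)),
    AffineIndependent ℝ (fun x : s => (x : EuclideanSpace ℝ (Fin n))) ∧
    Ω = convexHull ℝ (s : Set (EuclideanSpace ℝ (Fin n)))

/-- x is represented by the convex combination with (distinct) points `t` and strictly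
positive weights `w`, all points being extreme points of Ω. -/
def IsRep {n : ℕ} (Ω : Set (EuclideanSpace ℝ (Fin n))) (x : EuclideanSpace ℝ (Fin n))
    (t : Finset (EuclideanSpace ℝ (Fin n))) (w : EuclideanSpace ℝ (Fin n) → ℝ) : Prop :=
  (t : Set (EuclideanSpace ℝ (Fin n))) ⊆ Set.extremePoints ℝ Ω ∧
  (∀ y ∈ t, 0 < w y) ∧ (∑ y ∈ t, w y) = 1 ∧ (∑ y ∈ t, w y • y) = x

open Finset in
/-- The vertices of a simplex are extreme points of its convex hull. -/
lemma vertex_mem_extremePoints {n : ℕ} {s : Finset (EuclideanSpace ℝ (Fin n))}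
    (hs : AffineIndependent ℝ (fun x : s => (x : EuclideanSpace ℝ (Fin n))))
    {x : EuclideanSpace ℝ (Fin n)} (hx : x ∈ s) :
    x ∈ Set.extremePoints ℝ (convexHull ℝ (s : Set (EuclideanSpace ℝ (Fin n)))) := by
  classical
  rw [mem_extremePoints]
  refine ⟨subset_convexHull ℝ _ hx, ?_⟩
  intro x₁ h₁ x₂ h₂ hseg
  obtain ⟨u, hu0, hu1, hux⟩ := Finset.mem_convexHull'.1 h₁
  obtain ⟨v, hv0, hv1, hvx⟩ := Finset.mem_convexHull'.1 h₂
  obtain ⟨a, b, ha, hb, hab, hx'⟩ := hseg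
  set W : EuclideanSpace ℝ (Fin n) → ℝ := fun y => a * u y + b * v y with hWdef
  set D : EuclideanSpace ℝ (Fin n) → ℝ := fun y => if y = x then 1 else 0 with hDdef
  have hWsum : ∑ y ∈ s, W y = 1 := by
    simp only [hWdef, Finset.sum_add_distrib, ← Finset.mul_sum, hu1, hv1, mul_one, hab]
  have hDsum : ∑ y ∈ s, D y = 1 := by
    simp [hDdef, Finset.sum_ite_eq', hx]
  have hWc : ∑ y ∈ s, W y • y = x := by
    simp only [hWdef, add_smul, mul_smul, Finset.sum_add_distrib, ← Finset.smul_sum, hux, hvx]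
    exact hx'
  have hDc : ∑ y ∈ s, D y • y = x := by
    simp [hDdef, ite_smul, Finset.sum_ite_eq', hx]
  have key := hs.eq_of_sum_eq_sum_subtype (w₁ := W) (w₂ := D)
    (hWsum.trans hDsum.symm) (hWc.trans hDc.symm)
  have hzero : ∀ y ∈ s, y ≠ x → u y = 0 ∧ v y = 0 := by
    intro y hy hyx
    have h0 : W y = 0 := by rw [key y hy]; simp [hDdef, hyx]
    have h1 : 0 ≤ a * u y := mul_nonneg ha.le (hu0 y hy)
    have h2 : 0 ≤ b * v y := mul_nonneg hb.le (hv0 y hy)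
    have hu' : a * u y = 0 := by simp only [hWdef] at h0; linarith
    have hv' : b * v y = 0 := by simp only [hWdef] at h0; linarith
    refine ⟨?_, ?_⟩
    · rcases mul_eq_zero.1 hu' with h | h
      · exact absurd h ha.ne'
      · exact h
    · rcases mul_eq_zero.1 hv' with h | h
      · exact absurd h hb.ne'
      · exact h
  have hux1 : u x = 1 := by
    rw [← hu1]
    exact (Finset.sum_eq_single x (fun y hy hyx => (hzero y hy hyx).1)
      (fun h => absurd hx h)).symm
  have hvx1 : v x = 1 := by
    rw [← hv1]
    exact (Finset.sum_eq_single x (fun y hy hyx => (hzero y hy hyx).2)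
      (fun h => absurd hx h)).symm
  constructor
  · rw [← hux]
    rw [Finset.sum_eq_single x (fun y hy hyx => by rw [(hzero y hy hyx).1, zero_smul])
      (fun h => absurd hx h), hux1, one_smul]
  · rw [← hvx]
    rw [Finset.sum_eq_single x (fun y hy hyx => by rw [(hzero y hy hyx).2, zero_smul])
      (fun h => absurd hx h), hvx1, one_smul]

/-- If every point of Ω has a unique representation, the extreme points of Ω
are affinely independent (any finite subset of them is). -/
lemma affineIndependent_of_unique {n : ℕ} {Ω : Set (EuclideanSpace ℝ (Fin n))}
    (hΩcv : Convex ℝ Ω)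
    (H : ∀ x ∈ Ω, ∀ t₁ w₁ t₂ w₂, IsRep Ω x t₁ w₁ → IsRep Ω x t₂ w₂ →
      t₁ = t₂ ∧ ∀ y ∈ t₁, w₁ y = w₂ y)
    (t : Finset (EuclideanSpace ℝ (Fin n)))
    (htS : (t : Set (EuclideanSpace ℝ (Fin n))) ⊆ Set.extremePoints ℝ Ω) :
    AffineIndependent ℝ (fun x : t => (x : EuclideanSpace ℝ (Fin n))) := by
  classical
  by_contra hna
  obtain ⟨f, hf0, hfs, x, hxt, hfx⟩ :=
    exists_nontrivial_relation_sum_zero_of_not_affine_ind hna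
  set P := t.filter (fun y => 0 < f y) with hPdef
  set N := t.filter (fun y => f y < 0) with hNdef
  have hPN : Disjoint P N := by
    rw [Finset.disjoint_left]
    intro y hyP hyN
    rw [hPdef, Finset.mem_filter] at hyP
    rw [hNdef, Finset.mem_filter] at hyN
    linarith [hyP.2, hyN.2]
  have hPNt : P ∪ N ⊆ t := Finset.union_subset (Finset.filter_subset _ _) (Finset.filter_subset _ _)
  have houtside : ∀ y ∈ t, y ∉ P ∪ N → f y = 0 := by
    intro y hy hynot
    rw [Finset.mem_union, hPdef, hNdef, Finset.mem_filter, Finset.mem_filter] at hynot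
    push_neg at hynot
    linarith [hynot.1 hy, hynot.2 hy]
  have hsum_split : ∑ y ∈ P, f y + ∑ y ∈ N, f y = 0 := by
    rw [← Finset.sum_union hPN]
    rw [← hfs]
    exact Finset.sum_subset hPNt houtside
  have hvec_split : ∑ y ∈ P, f y • y + ∑ y ∈ N, f y • y = 0 := by
    rw [← Finset.sum_union hPN, ← hf0]
    exact Finset.sum_subset hPNt (fun y hy hynot => by rw [houtside y hy hynot, zero_smul])
  set c := ∑ y ∈ P, f y with hcdef
  -- both P and N are nonempty and c > 0
  have hPorN : P.Nonempty ∨ N.Nonempty := by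
    rcases lt_trichotomy (f x) 0 with h | h | h
    · exact Or.inr ⟨x, Finset.mem_filter.2 ⟨hxt, h⟩⟩
    · exact absurd h hfx
    · exact Or.inl ⟨x, Finset.mem_filter.2 ⟨hxt, h⟩⟩
  have hNneg : N.Nonempty → ∑ y ∈ N, f y < 0 := by
    intro hN
    have : ∑ y ∈ N, f y < ∑ y ∈ N, (0 : ℝ) :=
      Finset.sum_lt_sum_of_nonempty hN (fun y hy => (Finset.mem_filter.1 hy).2)
    simpa using this
  have hPpos : P.Nonempty → 0 < c := by
    intro hP
    have : ∑ y ∈ P, (0 : ℝ) < ∑ y ∈ P, f y :=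
      Finset.sum_lt_sum_of_nonempty hP (fun y hy => (Finset.mem_filter.1 hy).2)
    simpa [hcdef] using this
  have hP : P.Nonempty := by
    rcases hPorN with h | h
    · exact h
    · rcases Finset.nonempty_iff_ne_empty.1 h with _
      by_contra hPe
      rw [Finset.not_nonempty_iff_eq_empty] at hPe
      have : c = 0 := by simp [hcdef, hPe]
      linarith [hNneg h, hsum_split, this]
  have hc : 0 < c := hPpos hP
  have hN : N.Nonempty := by
    by_contra hNe
    rw [Finset.not_nonempty_iff_eq_empty] at hNe
    have : ∑ y ∈ N, f y = 0 := by simp [hNe]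
    linarith
  -- the common point
  set x₀ := ∑ y ∈ P, (f y / c) • y with hx₀def
  have hSsubΩ : Set.extremePoints ℝ Ω ⊆ Ω := extremePoints_subset
  have hrep₁ : IsRep Ω x₀ P (fun y => f y / c) := by
    refine ⟨(Finset.coe_subset.2 (Finset.filter_subset _ _)).trans htS, ?_, ?_, rfl⟩
    · exact fun y hy => div_pos (Finset.mem_filter.1 hy).2 hc
    · rw [← Finset.sum_div, ← hcdef, div_self hc.ne']
  have hrep₂ : IsRep Ω x₀ N (fun y => -f y / c) := by
    refine ⟨(Finset.coe_subset.2 (Finset.filter_subset _ _)).trans htS, ?_, ?_, ?_⟩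
    · exact fun y hy => div_pos (neg_pos.2 (Finset.mem_filter.1 hy).2) hc
    · rw [← Finset.sum_div]
      have : ∑ y ∈ N, -f y = c := by
        have := hsum_split
        rw [Finset.sum_neg_distrib]
        linarith
      rw [this, div_self hc.ne']
    · have e2 : ∑ y ∈ N, (-f y) • y = ∑ y ∈ P, f y • y := by
        simp only [neg_smul, Finset.sum_neg_distrib]
        exact neg_eq_of_add_eq_zero_left hvec_split
      have e1 : ∑ y ∈ N, (-f y / c) • y = c⁻¹ • ∑ y ∈ N, (-f y) • y := by
        rw [Finset.smul_sum]
        exact Finset.sum_congr rfl fun y _ => by rw [smul_smul, div_eq_inv_mul]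
      have e3 : x₀ = c⁻¹ • ∑ y ∈ P, f y • y := by
        rw [Finset.smul_sum]
        exact Finset.sum_congr rfl fun y _ => by rw [smul_smul, div_eq_inv_mul]
      rw [e1, e2, ← e3]
  have hx₀Ω : x₀ ∈ Ω :=
    hΩcv.sum_mem (fun y hy => (div_pos (Finset.mem_filter.1 hy).2 hc).le)
      (by rw [← Finset.sum_div, ← hcdef, div_self hc.ne'])
      (fun y hy => hSsubΩ (htS (Finset.filter_subset _ _ hy)))
  obtain ⟨hPNeq, -⟩ := H x₀ hx₀Ω P _ N _ hrep₁ hrep₂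
  obtain ⟨y, hyP⟩ := hP
  have hyN : y ∈ N := hPNeq ▸ hyP
  exact Finset.disjoint_left.1 hPN hyP hyN
theorem simplex_iff_unique_decomposition {n : ℕ}
    (Ω : Set (EuclideanSpace ℝ (Fin n))) (hΩc : IsCompact Ω) (hΩcv : Convex ℝ Ω)
    (hne : Ω.Nonempty) :
    IsSimplex Ω ↔
      ∀ x ∈ Ω,
        (∃ t w, IsRep Ω x t w) ∧
        (∀ t₁ w₁ t₂ w₂, IsRep Ω x t₁ w₁ → IsRep Ω x t₂ w₂ →
          t₁ = t₂ ∧ ∀ y ∈ t₁, w₁ y = w₂ y) := by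
  classical
  constructor
  · rintro ⟨s, hs, rfl⟩
    intro x hx
    constructor
    · -- existence
      obtain ⟨w, hw0, hw1, hwx⟩ := Finset.mem_convexHull'.1 hx
      refine ⟨s.filter (fun y => 0 < w y), w, ?_, ?_, ?_, ?_⟩
      · intro y hy
        exact vertex_mem_extremePoints hs
          (Finset.filter_subset _ _ (Finset.mem_coe.1 hy))
      · exact fun y hy => (Finset.mem_filter.1 hy).2
      · rw [Finset.sum_filter_of_ne
          (fun y hy hne => lt_of_le_of_ne (hw0 y hy) (Ne.symm hne)), hw1]
      · rw [Finset.sum_filter_of_ne, hwx]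
        intro y hy hne
        rcases (hw0 y hy).lt_or_eq with h | h
        · exact h
        · exact absurd (by rw [← h, zero_smul]) hne
    · -- uniqueness
      intro t₁ w₁ t₂ w₂ h₁ h₂
      obtain ⟨ht₁S, hw₁0, hw₁1, hw₁x⟩ := h₁
      obtain ⟨ht₂S, hw₂0, hw₂1, hw₂x⟩ := h₂
      have ht₁s : t₁ ⊆ s := fun y hy =>
        Finset.mem_coe.1 (extremePoints_convexHull_subset (ht₁S (Finset.mem_coe.2 hy)))
      have ht₂s : t₂ ⊆ s := fun y hy =>
        Finset.mem_coe.1 (extremePoints_convexHull_subset (ht₂S (Finset.mem_coe.2 hy)))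
      set W₁ : EuclideanSpace ℝ (Fin n) → ℝ := fun y => if y ∈ t₁ then w₁ y else 0 with hW₁def
      set W₂ : EuclideanSpace ℝ (Fin n) → ℝ := fun y => if y ∈ t₂ then w₂ y else 0 with hW₂def
      have hW₁sum : ∑ y ∈ s, W₁ y = 1 := by
        rw [hW₁def]
        rw [Finset.sum_ite_mem, Finset.inter_eq_right.2 ht₁s, hw₁1]
      have hW₂sum : ∑ y ∈ s, W₂ y = 1 := by
        rw [hW₂def]
        rw [Finset.sum_ite_mem, Finset.inter_eq_right.2 ht₂s, hw₂1]
      have hW₁c : ∑ y ∈ s, W₁ y • y = x := by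
        simp only [hW₁def, ite_smul, zero_smul]
        rw [Finset.sum_ite_mem, Finset.inter_eq_right.2 ht₁s, hw₁x]
      have hW₂c : ∑ y ∈ s, W₂ y • y = x := by
        simp only [hW₂def, ite_smul, zero_smul]
        rw [Finset.sum_ite_mem, Finset.inter_eq_right.2 ht₂s, hw₂x]
      have key := hs.eq_of_sum_eq_sum_subtype (w₁ := W₁) (w₂ := W₂)
        (hW₁sum.trans hW₂sum.symm) (hW₁c.trans hW₂c.symm)
      have teq : t₁ = t₂ := by
        ext y
        constructor
        · intro hy
          have hk := key y (ht₁s hy)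
          by_contra hy2
          rw [hW₁def, hW₂def] at hk
          simp only [hy, if_true, hy2, if_false] at hk
          exact absurd hk (ne_of_gt (hw₁0 y hy))
        · intro hy
          have hk := key y (ht₂s hy)
          by_contra hy2
          rw [hW₁def, hW₂def] at hk
          simp only [hy, if_true, hy2, if_false] at hk
          exact absurd hk.symm (ne_of_gt (hw₂0 y hy))
      refine ⟨teq, fun y hy => ?_⟩
      have hy₂ : y ∈ t₂ := teq ▸ hy
      have hk := key y (ht₁s hy)
      rw [hW₁def, hW₂def] at hk
      simpa only [hy, if_true, hy₂, if_false] using hk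
  · -- converse
    intro H
    have H2 : ∀ x ∈ Ω, ∀ t₁ w₁ t₂ w₂, IsRep Ω x t₁ w₁ → IsRep Ω x t₂ w₂ →
        t₁ = t₂ ∧ ∀ y ∈ t₁, w₁ y = w₂ y := fun x hx => (H x hx).2
    have hAI := affineIndependent_of_unique hΩcv H2
    have hfin : (Set.extremePoints ℝ Ω).Finite := by
      by_contra hinf
      obtain ⟨t, hts, hcard⟩ := Set.Infinite.exists_subset_card_eq hinf (n + 2)
      have h1 := (hAI t hts).card_le_finrank_succ
      rw [Fintype.card_coe, hcard] at h1
      have h2 : Module.finrank ℝ ↥(vectorSpan ℝ (Set.range fun x : t => (x : EuclideanSpace ℝ (Fin n)))) ≤ n := by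
        have := Submodule.finrank_le (vectorSpan ℝ (Set.range fun x : t => (x : EuclideanSpace ℝ (Fin n))))
        rwa [finrank_euclideanSpace_fin] at this
      omega
    refine ⟨hfin.toFinset, ?_, ?_⟩
    · exact hAI hfin.toFinset (by rw [hfin.coe_toFinset])
    · rw [hfin.coe_toFinset, ← (hfin.isClosed_convexHull (𝕜 := ℝ)).closure_eq]
      exact (closure_convexHull_extremePoints hΩc hΩcv).symm
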